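/- Exact U(1) decoupling: Let Ψ = A + (χ/√N)·1 where A is an N×N matrix of odd exterior-algebra generators with Tr A = 0, χ is an additional odd generator anticommuting with all entries of A, and 1 is the identity matrix. Then for every odd p ≥ 3, Tr(Ψ^p) = Tr(A^p). Specifically: setting X = (χ/√N)·1, one has (A+X)^p = A^p + X·A^{p-1}, and Tr(X·A^{p-1}) = 0 because p−1 is even. -/
import Mathlib

section Aux

variable {M : Type*} [AddCommGroup M] [Module ℂ M]

local notation "E" => ExteriorAlgebra ℂ M

noncomputable def Rgen (M : Type*) [AddCommGroup M] [Module ℂ M] :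
    Submodule ℂ (ExteriorAlgebra ℂ M) :=
  LinearMap.range (ExteriorAlgebra.ι ℂ : M →ₗ[ℂ] ExteriorAlgebra ℂ M)

lemma anticomm_one {a b : E} (ha : a ∈ Rgen M) (hb : b ∈ Rgen M) :
    a * b = -(b * a) := by
  obtain ⟨x, rfl⟩ := ha
  obtain ⟨y, rfl⟩ := hb
  exact eq_neg_of_add_eq_zero_left (ExteriorAlgebra.ι_add_mul_swap x y)

lemma anticomm_pow {a : E} (ha : a ∈ Rgen M) :
    ∀ (k : ℕ) (b : E), b ∈ (Rgen M) ^ k → a * b = ((-1 : ℂ) ^ k) • (b * a) := by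
  intro k b hb
  induction hb using Submodule.pow_induction_on_left' with
  | algebraMap r =>
    simp [Algebra.commutes, Algebra.smul_def, mul_assoc]
  | add x y i hx hy ihx ihy =>
    rw [mul_add, add_mul, smul_add, ihx, ihy]
  | mem_mul m hm i x hx ih =>
    rw [← mul_assoc, anticomm_one ha hm, neg_mul, mul_assoc, ih, mul_smul_comm,
      pow_succ, mul_neg_one, neg_smul, mul_assoc]

/-- entries of `A^k` lie in `Rgen^k`. -/
lemma pow_entry_mem {n : ℕ} (A : Matrix (Fin n) (Fin n) E)
    (hA : ∀ i j, A i j ∈ Rgen M) (k : ℕ) (hk : 1 ≤ k) (i j : Fin n) :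
    (A ^ k) i j ∈ (Rgen M) ^ k := by
  induction k generalizing i j with
  | zero => omega
  | succ k ih =>
    rcases Nat.eq_or_lt_of_le hk with h | h
    · simp only [← h, pow_one]
      simpa using (hA i j)
    · have hk1 : 1 ≤ k := by omega
      have hps : A ^ (k+1) = A ^ k * A := pow_succ A k
      rw [hps, Matrix.mul_apply, pow_succ]
      exact Submodule.sum_mem _ fun l _ => Submodule.mul_mem_mul (ih hk1 i l) (hA l j)

/-- Key ring identity: if `x^2 = 0` and `a*x = -(x*a)`, then
`(a+x)^n = a^n + s n • (x * a^(n-1))`. -/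
lemma add_pow_of_sq_zero {R : Type*} [Ring R] (a x : R)
    (hx2 : x * x = 0) (hax : a * x = -(x * a)) (n : ℕ) (hn : 1 ≤ n) :
    (a + x) ^ n = a ^ n + (if Even n then (0:ℤ) else 1) • (x * a ^ (n-1)) := by
  have hpow : ∀ k : ℕ, a ^ k * x = ((-1:ℤ)^k) • (x * a ^ k) := by
    intro k
    induction k with
    | zero => simp
    | succ k ihk =>
      rw [pow_succ a k, mul_assoc, hax, mul_neg, ← mul_assoc, ihk, smul_mul_assoc,
        mul_assoc, ← pow_succ a k, pow_succ (-1:ℤ) k, mul_neg_one, neg_smul]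
  induction n with
  | zero => omega
  | succ m ih =>
    rcases Nat.eq_or_lt_of_le hn with h | h
    · simp [← h]
    · have hm1 : 1 ≤ m := by omega
      have hmm : m - 1 + 1 = m := by omega
      have hz : x * a ^ (m-1) * x = 0 := by
        rw [mul_assoc, hpow (m-1), mul_smul_comm, ← mul_assoc, hx2, zero_mul, smul_zero]
      have hxa : x * a ^ (m-1) * a = x * a ^ m := by
        rw [mul_assoc, ← pow_succ, hmm]
      rw [pow_succ, ih hm1, add_mul, mul_add, mul_add, smul_mul_assoc, smul_mul_assoc,
        hz, hxa, hpow m, ← pow_succ, smul_zero]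
      have hsm : m + 1 - 1 = m := by omega
      rw [hsm]
      rcases Nat.even_or_odd m with he | ho
      · have h1 : ¬ Even (m+1) := by simp [Nat.even_add_one, he]
        simp [he, h1, Even.neg_one_pow he]
      · have he1 : Even (m+1) := by simp [Nat.even_add_one, Nat.not_even_iff_odd.mpr ho]
        simp [Nat.not_even_iff_odd.mpr ho, he1, Odd.neg_one_pow ho]

end Aux

/-- Exact `U(1)` decoupling: let `Ψ = A + (χ/√N)·1`, where `A` is an `N × N` matrix of odd
(degree-one) exterior-algebra elements with `Tr A = 0` and `χ` is a further odd degree-one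
element.  Then for every odd `p ≥ 3`, `Tr(Ψ^p) = Tr(A^p)`. -/
theorem stmt3 {M : Type*} [AddCommGroup M] [Module ℂ M] (N : ℕ)
    (A : Matrix (Fin N) (Fin N) (ExteriorAlgebra ℂ M))
    (hA : ∀ i j, A i j ∈ LinearMap.range (ExteriorAlgebra.ι ℂ : M →ₗ[ℂ] ExteriorAlgebra ℂ M))
    (htr : Matrix.trace A = 0)
    (χ : ExteriorAlgebra ℂ M)
    (hχ : χ ∈ LinearMap.range (ExteriorAlgebra.ι ℂ : M →ₗ[ℂ] ExteriorAlgebra ℂ M))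
    (p : ℕ) (hp : Odd p) (hp3 : 3 ≤ p) :
    Matrix.trace
        ((A + Matrix.diagonal fun _ => ((Real.sqrt N : ℂ))⁻¹ • χ) ^ p) =
      Matrix.trace (A ^ p) := by
  set c : ℂ := ((Real.sqrt N : ℂ))⁻¹
  set x : ExteriorAlgebra ℂ M := c • χ with hxdef
  set X : Matrix (Fin N) (Fin N) (ExteriorAlgebra ℂ M) := Matrix.diagonal fun _ => x with hX
  have hχ' : χ ∈ Rgen M := hχ
  have hA' : ∀ i j, A i j ∈ Rgen M := hA
  have hxmem : x ∈ Rgen M := Submodule.smul_mem _ _ hχ'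
  -- x * x = 0
  have hxx : x * x = 0 := by
    have h1 := anticomm_one (M := M) hxmem hxmem
    have h2 : (2:ℂ) • (x * x) = 0 := by
      rw [two_smul]; nth_rewrite 1 [h1]; exact neg_add_cancel _
    exact (smul_eq_zero.mp h2).resolve_left (by norm_num)
  -- X * X = 0
  have hXX : X * X = 0 := by
    rw [hX, Matrix.diagonal_mul_diagonal]
    simp [hxx]
  -- A * X = -(X * A)
  have hAX : A * X = -(X * A) := by
    ext i j
    rw [hX]
    simp only [Matrix.mul_diagonal, Matrix.diagonal_mul, Matrix.neg_apply]
    exact anticomm_one (hA' i j) hxmem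
  have hp1 : 1 ≤ p := by omega
  have hkey := add_pow_of_sq_zero A X hXX hAX p hp1
  have hnotev : ¬ Even p := Nat.not_even_iff_odd.mpr hp
  rw [hkey]
  simp only [hnotev, if_false, one_smul]
  rw [Matrix.trace_add]
  have hpe : Even (p - 1) := by
    rcases hp with ⟨k, hk⟩; exact ⟨k, by omega⟩
  -- trace of even power is zero
  have htr_even : Matrix.trace (A ^ (p-1)) = 0 := by
    set m := p - 1 with hm
    set B := A ^ (m - 1) with hB
    have hm1 : 1 ≤ m - 1 := by omega
    have hmm : m - 1 + 1 = m := by omega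
    have h1 : Matrix.trace (A ^ m) = Matrix.trace (A * B) := by
      rw [hB, ← pow_succ', hmm]
    have h2 : Matrix.trace (A ^ m) = Matrix.trace (B * A) := by
      rw [hB, ← pow_succ, hmm]
    have hodd : Odd (m - 1) := by
      rcases hpe with ⟨k, hk⟩
      exact ⟨k - 1, by omega⟩
    have hsign : ((-1:ℂ) ^ (m-1)) = -1 := Odd.neg_one_pow hodd
    have key : Matrix.trace (A * B) = - Matrix.trace (B * A) := by
      have e2 : Matrix.trace (B * A) = ∑ i, ∑ j, B j i * A i j := by
        simp only [Matrix.trace, Matrix.diag_apply, Matrix.mul_apply]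
        exact Finset.sum_comm
      have e1 : Matrix.trace (A * B) = ∑ i, ∑ j, A i j * B j i := by
        simp only [Matrix.trace, Matrix.diag_apply, Matrix.mul_apply]
      rw [e1, e2, ← Finset.sum_neg_distrib]
      refine Finset.sum_congr rfl fun i _ => ?_
      rw [← Finset.sum_neg_distrib]
      refine Finset.sum_congr rfl fun j _ => ?_
      rw [anticomm_pow (hA' i j) (m-1) _ (pow_entry_mem A hA' (m-1) hm1 j i), hsign,
        neg_one_smul]
    have h3 : Matrix.trace (A ^ m) = - Matrix.trace (A ^ m) := by
      conv_lhs => rw [h1, key, ← h2]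
    have h4 : (2:ℂ) • Matrix.trace (A ^ m) = 0 := by
      rw [two_smul]; nth_rewrite 1 [h3]; exact neg_add_cancel _
    exact (smul_eq_zero.mp h4).resolve_left (by norm_num)
  have hfin : Matrix.trace (X * A ^ (p-1)) = 0 := by
    have e : Matrix.trace (X * A ^ (p-1)) = x * Matrix.trace (A ^ (p-1)) := by
      rw [Matrix.trace, Matrix.trace, Finset.mul_sum]
      refine Finset.sum_congr rfl fun i _ => ?_
      rw [hX]
      simp [Matrix.diagonal_mul]
    rw [e, htr_even, mul_zero]
  rw [hfin, add_zero]
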